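/- arXiv:2211.01826 — 2 statements merged into one kernel-verified Lean document; each statement's English description precedes it below -/
import Mathlib

section
/- The forgetful functor U : Lens → Cat both preserves and reflects epimorphisms; that is, a lens F : A → B is an epimorphism in the category Lens if and only if its get functor U F is an epimorphism in the category Cat of small categories and functors. -/
universe u

open CategoryTheory CategoryTheory.Limits

namespace LensPaper

section OutDefs

variable {A : Type*} [Category A] {B : Type*} [Category B] {C : Type*} [Category C]

/-- The "out-set" of an object: the collection of all morphisms out of `X`,
bundled with their targets. -/
def Out (X : A) : Type _ := Σ Y : A, X ⟶ Y

/-- The identity element of an out-set. -/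
def Out.id (X : A) : Out X := ⟨X, 𝟙 X⟩

/-- Composition of a morphism out of `X` with a morphism out of its target. -/
def Out.comp {X : A} (u : Out X) (v : Out u.1) : Out X := ⟨v.1, u.2 ≫ v.2⟩

/-- Transport of out-sets along an equality of objects. -/
def Out.cast {X Y : A} (h : X = Y) (u : Out X) : Out Y := ⟨u.1, eqToHom h.symm ≫ u.2⟩

@[simp] theorem Out.cast_rfl {X : A} (u : Out X) : Out.cast rfl u = u := by
  cases u; simp [Out.cast] <;> rfl

theorem Out.cast_cast {X Y Z : A} (h₁ : X = Y) (h₂ : Y = Z) (u : Out X) :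
    Out.cast h₂ (Out.cast h₁ u) = Out.cast (h₁.trans h₂) u := by
  subst h₁; subst h₂; simp

/-- The action of a functor on out-sets. -/
def mapOut (F : A ⥤ B) {X : A} (u : Out X) : Out (F.obj X) := ⟨F.obj u.1, F.map u.2⟩

theorem mapOut_cast (F : A ⥤ B) {X Y : A} (h : X = Y) (u : Out X) :
    mapOut F (Out.cast h u) = Out.cast (congrArg F.obj h) (mapOut F u) := by
  subst h; simp

/-- The set of all morphisms of a category, bundled with their endpoints. -/
def Mor (A : Type*) [Category A] : Type _ := Σ (X Y : A), X ⟶ Y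

/-- The action of a functor on morphisms, as a function on bundled morphisms. -/
def mapMor (F : A ⥤ B) : Mor A → Mor B := fun m => ⟨F.obj m.1, F.obj m.2.1, F.map m.2.2⟩

/-- The set of composable pairs of morphisms of a category. -/
def CompPair (A : Type*) [Category A] : Type _ := Σ (X Y Z : A), (X ⟶ Y) × (Y ⟶ Z)

/-- The action of a functor on composable pairs. -/
def mapCompPair (F : A ⥤ B) : CompPair A → CompPair B :=
  fun p => ⟨F.obj p.1, F.obj p.2.1, F.obj p.2.2.1, (F.map p.2.2.2.1, F.map p.2.2.2.2)⟩

/-- A functor is a discrete opfibration if every morphism out of `F.obj X`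
has a unique lift to a morphism out of `X`. -/
def IsDiscreteOpfibration (F : A ⥤ B) : Prop :=
  ∀ (X : A) (u : Out (F.obj X)), ∃! v : Out X, mapOut F v = u

/-- A cosieve is an injective-on-objects discrete opfibration. -/
def IsCosieve (F : A ⥤ B) : Prop :=
  IsDiscreteOpfibration F ∧ Function.Injective F.obj

end OutDefs

/-- An (asymmetric delta) lens: a get functor together with put functions
satisfying PutGet, PutId and PutPut. -/
structure DLens (A : Type*) (B : Type*) [Category A] [Category B] where
  get : A ⥤ B
  put : ∀ (X : A), Out (get.obj X) → Out X
  putGet : ∀ (X : A) (u : Out (get.obj X)), mapOut get (put X u) = u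
  putId : ∀ (X : A), put X (Out.id (get.obj X)) = Out.id X
  putPut : ∀ (X : A) (u : Out (get.obj X)) (v : Out u.1) (h : u.1 = get.obj (put X u).1),
      put X (u.comp v) = (put X u).comp (put (put X u).1 (Out.cast h v))

namespace DLens

variable {A : Type*} [Category A] {B : Type*} [Category B] {C : Type*} [Category C]

theorem put_cast (F : DLens A B) {X₁ X₂ : A} (e : X₁ = X₂) (u : Out (F.get.obj X₁)) :
    Out.cast e (F.put X₁ u) = F.put X₂ (Out.cast (congrArg F.get.obj e) u) := by
  subst e; simp

/-- The identity lens. -/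
def id (A : Type*) [Category A] : DLens A A where
  get := Functor.id A
  put X u := u
  putGet X u := rfl
  putId X := rfl
  putPut X u v h := by
    have hv : Out.cast h v = v := Out.cast_rfl v
    rw [hv]

/-- Composition of lenses. -/
def comp (F : DLens A B) (G : DLens B C) : DLens A C where
  get := F.get ⋙ G.get
  put X u := F.put X (G.put (F.get.obj X) u)
  putGet X u := by
    show mapOut G.get (mapOut F.get (F.put X (G.put (F.get.obj X) u))) = u
    rw [F.putGet, G.putGet]
  putId X := by
    show F.put X (G.put (F.get.obj X) (Out.id (G.get.obj (F.get.obj X)))) = Out.id X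
    rw [G.putId, F.putId]
  putPut X u v h := by
    have h₁ : u.1 = G.get.obj (G.put (F.get.obj X) u).1 :=
      (congrArg Sigma.fst (G.putGet (F.get.obj X) u)).symm
    show F.put X (G.put (F.get.obj X) (u.comp v)) = _
    rw [G.putPut (F.get.obj X) u v h₁]
    have h₂ : (G.put (F.get.obj X) u).1 =
        F.get.obj (F.put X (G.put (F.get.obj X) u)).1 :=
      (congrArg Sigma.fst (F.putGet X (G.put (F.get.obj X) u))).symm
    rw [F.putPut X (G.put (F.get.obj X) u) _ h₂]
    rw [put_cast G h₂, Out.cast_cast]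

end DLens

/-- The category of small categories and (asymmetric delta) lenses. -/
def LensCat : Type (u + 1) := Cat.{u, u}

/-- Regard a small category as an object of the category of lenses. -/
def LensCat.of (C : Cat.{u, u}) : LensCat.{u} := C

/-- The underlying small category of an object of the category of lenses. -/
def LensCat.toCat (A : LensCat.{u}) : Cat.{u, u} := A

instance : Category.{u} LensCat.{u} where
  Hom A B := DLens A.toCat B.toCat
  id A := DLens.id A.toCat
  comp F G := F.comp G
  id_comp F := rfl
  comp_id F := rfl
  assoc F G H := rfl

/-- The get functor of a lens, i.e. a morphism of `LensCat` regarded as a `DLens`. -/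
def LensCat.get {A B : LensCat.{u}} (F : A ⟶ B) : A.toCat ⟶ B.toCat := (DLens.get F).toCatHom

/-- The identity-on-objects forgetful functor from the category of lenses to the
category of small categories and functors, sending a lens to its get functor. -/
def lensForget : LensCat.{u} ⥤ Cat.{u, u} where
  obj A := A.toCat
  map F := (DLens.get F).toCatHom
  map_id A := rfl
  map_comp F G := rfl

end LensPaper
open CategoryTheory CategoryTheory.Limits LensPaper

section EpiAux

variable {C : Type*} [Category C] {D : Type*} [Category D]

theorem Out.ext' {X : C} {u v : Out X} (h1 : u.1 = v.1)
    (h2 : u.2 ≫ eqToHom h1 = v.2) : u = v := by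
  obtain ⟨a, f⟩ := u
  obtain ⟨b, g⟩ := v
  dsimp at h1
  subst h1
  simp only [eqToHom_refl, Category.comp_id] at h2
  subst h2
  rfl

theorem Out.hom_rel {X : C} {u v : Out X} (h : u = v) :
    u.2 ≫ eqToHom (congrArg Sigma.fst h) = v.2 := by subst h; simp

namespace LensPaper.DLens

theorem put_injective (F : DLens C D) (X : C) : Function.Injective (F.put X) := by
  intro u v h
  rw [← F.putGet X u, ← F.putGet X v, h]

theorem out_surjective (F : DLens C D) (X : C) :
    Function.Surjective (fun u : Out X => mapOut F.get u) :=
  fun u => ⟨F.put X u, F.putGet X u⟩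

theorem range_closed (F : DLens C D) {b c : D} (hb : b ∈ Set.range F.get.obj)
    (f : b ⟶ c) : c ∈ Set.range F.get.obj := by
  obtain ⟨a, rfl⟩ := hb
  obtain ⟨v, hv⟩ := F.out_surjective a ⟨c, f⟩
  exact ⟨v.1, congrArg Sigma.fst hv⟩

theorem ext_lens {L1 L2 : DLens C D} (hget : L1.get = L2.get)
    (hput : ∀ X (u : Out (L1.get.obj X)),
      L1.put X u = L2.put X (Out.cast (Functor.congr_obj hget X) u)) : L1 = L2 := by
  obtain ⟨g1, p1, pg1, pi1, pp1⟩ := L1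
  obtain ⟨g2, p2, pg2, pi2, pp2⟩ := L2
  dsimp at hget
  subst hget
  simp only [DLens.mk.injEq, heq_eq_eq, true_and]
  funext X u
  have h := hput X u
  exact h.trans (congrArg (p2 X) (Out.cast_rfl u))

theorem congr_put {L1 L2 : DLens C D} (h : L1 = L2) (X : C) (u : Out (L1.get.obj X)) :
    L1.put X u = L2.put X (Out.cast (Functor.congr_obj (congrArg DLens.get h) X) u) := by
  subst h
  congr 1
  exact (Out.cast_rfl u).symm

end LensPaper.DLens

/-- The indiscrete category on the type of propositions. -/
def IndiscP : Type u := ULift.{u} Prop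

instance : Category.{u} IndiscP.{u} where
  Hom _ _ := PUnit
  id _ := ⟨⟩
  comp _ _ := ⟨⟩

theorem cat_epi_obj_surjective {X Y : Cat.{u, u}} (F : X ⟶ Y) (hF : Epi F) :
    Function.Surjective F.toFunctor.obj := by
  intro b
  by_contra hb
  push_neg at hb
  let S : Y ⟶ Cat.of IndiscP.{u} := Functor.toCatHom { obj := fun _ => ⟨False⟩, map := fun _ => ⟨⟩ }
  let T : Y ⟶ Cat.of IndiscP.{u} := Functor.toCatHom { obj := fun y => ⟨y = b⟩, map := fun _ => ⟨⟩ }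
  have hST : F ≫ S = F ≫ T := by
    refine Cat.ext (CategoryTheory.Functor.ext (fun a => ?_) (fun a a' f => ?_))
    · exact congrArg ULift.up (eq_false (hb a)).symm
    · rfl
  have := hF.left_cancellation S T hST
  have h2 : False = (b = b) := congrArg ULift.down (Functor.congr_obj (congrArg Cat.Hom.toFunctor this) b)
  exact h2.symm ▸ (rfl : b = b)

theorem epi_get_of_surj {A B : LensCat.{u}} (F : A ⟶ B)
    (hs : Function.Surjective (DLens.get F).obj) : Epi (lensForget.map F) := by
  constructor
  intro Z (S : B.toCat ⟶ Z) (T : B.toCat ⟶ Z) h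
  have hobj : ∀ b : ↑B.toCat, S.toFunctor.obj b = T.toFunctor.obj b := by
    intro b
    obtain ⟨a, rfl⟩ := hs b
    exact Functor.congr_obj (congrArg Cat.Hom.toFunctor h) a
  refine Cat.ext (CategoryTheory.Functor.ext hobj (fun b c f => ?_))
  obtain ⟨a, rfl⟩ := hs b
  obtain ⟨v, hv⟩ := DLens.out_surjective F a ⟨c, f⟩
  have h1 : (DLens.get F).obj v.1 = c := congrArg Sigma.fst hv
  have h2 : (DLens.get F).map v.2 ≫ eqToHom h1 = f := Out.hom_rel hv
  have h3 : S.toFunctor.map ((DLens.get F).map v.2)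
      = eqToHom (Functor.congr_obj (congrArg Cat.Hom.toFunctor h) a) ≫ T.toFunctor.map ((DLens.get F).map v.2)
          ≫ eqToHom (Functor.congr_obj (congrArg Cat.Hom.toFunctor h) v.1).symm := Functor.congr_hom (congrArg Cat.Hom.toFunctor h) v.2
  rw [← h2]
  simp only [Functor.map_comp, eqToHom_map, h3, Category.assoc, eqToHom_trans]
  erw [Category.assoc, Category.assoc, eqToHom_trans]
  rfl

section Glue

variable {B : Type*} [Category B]

/-- Two copies of `B` glued along the out-closed subset `P`. -/
structure Glue (P : B → Prop) (hP : ∀ ⦃b c : B⦄, P b → (b ⟶ c) → P c) where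
  base : B
  tag : Prop
  cond : P base → tag = False

variable {P : B → Prop} {hP : ∀ ⦃b c : B⦄, P b → (b ⟶ c) → P c}

theorem Glue.ext' {x y : Glue P hP} (h1 : x.base = y.base) (h2 : x.tag = y.tag) :
    x = y := by
  cases x; cases y; dsimp at h1 h2; subst h1; subst h2; rfl

instance : Category (Glue P hP) where
  Hom x y := {f : x.base ⟶ y.base // x.tag = y.tag ∨ P y.base}
  id x := ⟨𝟙 _, Or.inl rfl⟩
  comp {x y z} f g := ⟨f.1 ≫ g.1, by
    rcases g.2 with hg | hg
    · rcases f.2 with hf | hf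
      · exact Or.inl (hf.trans hg)
      · exact Or.inr (hP hf g.1)
    · exact Or.inr hg⟩
  id_comp f := Subtype.ext (Category.id_comp f.1)
  comp_id f := Subtype.ext (Category.comp_id f.1)
  assoc f g h := Subtype.ext (Category.assoc f.1 g.1 h.1)

@[simp] theorem glue_comp_val {x y z : Glue P hP} (f : x ⟶ y) (g : y ⟶ z) :
    (f ≫ g).1 = f.1 ≫ g.1 := rfl

@[simp] theorem glue_id_val (x : Glue P hP) : (𝟙 x : x ⟶ x).1 = 𝟙 x.base := rfl

@[simp] theorem glue_eqToHom_val {x y : Glue P hP} (h : x = y) :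
    (eqToHom h).1 = eqToHom (congrArg Glue.base h) := by
  subst h; rfl

/-- A "tagging" lens from `B` into the glued category. -/
def glueLens (τ : B → Prop) (hτ : ∀ b, P b → τ b = False)
    (hmor : ∀ ⦃b c : B⦄, (b ⟶ c) → (τ b = τ c ∨ P c))
    (hreal : ∀ ⦃b : B⦄ (y : Glue P hP)
      (_ : (Glue.mk b (τ b) (hτ b) : Glue P hP) ⟶ y), y.tag = τ y.base) :
    DLens B (Glue P hP) where
  get :=
    { obj := fun b => Glue.mk b (τ b) (hτ b)
      map := fun f => ⟨f, hmor f⟩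
      map_id := fun _ => rfl
      map_comp := fun _ _ => rfl }
  put X u := ⟨u.1.base, u.2.1⟩
  putGet X u := by
    refine Out.ext' (Glue.ext' rfl (hreal u.1 u.2).symm) ?_
    refine Subtype.ext ?_
    simp only [glue_comp_val, glue_eqToHom_val]
    exact Category.comp_id _
  putId X := rfl
  putPut X u v h := by
    dsimp [Out.comp, Out.cast]
    congr 1
    simp

theorem glueLens_put_eq (τ1 : B → Prop) (hτ1) (hmor1) (hreal1)
    (τ2 : B → Prop) (hτ2) (hmor2) (hreal2) (X : B)
    (u : Out ((glueLens (P := P) (hP := hP) τ1 hτ1 hmor1 hreal1).get.obj X))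
    (h : (glueLens (P := P) (hP := hP) τ1 hτ1 hmor1 hreal1).get.obj X
        = (glueLens (P := P) (hP := hP) τ2 hτ2 hmor2 hreal2).get.obj X) :
    (glueLens (P := P) (hP := hP) τ1 hτ1 hmor1 hreal1).put X u
      = (glueLens (P := P) (hP := hP) τ2 hτ2 hmor2 hreal2).put X (Out.cast h u) := by
  dsimp [glueLens, Out.cast]
  refine congrArg (Sigma.mk u.1.base) ?_
  simp only [glue_comp_val, glue_eqToHom_val]
  simp only [eqToHom_refl, Category.id_comp]

end Glue

theorem lens_epi_surj {A B : LensCat.{u}} (F : A ⟶ B) (hF : Epi F) :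
    Function.Surjective (DLens.get F).obj := by
  classical
  by_contra hsurj
  unfold Function.Surjective at hsurj
  push_neg at hsurj
  obtain ⟨b₀, hb₀'⟩ := hsurj
  set P : ↑B.toCat → Prop := fun b => b ∈ Set.range (DLens.get F).obj with hPdef
  have hb₀ : ¬ P b₀ := by rintro ⟨a, ha⟩; exact hb₀' a ha
  have hP : ∀ ⦃b c : ↑B.toCat⦄, P b → (b ⟶ c) → P c :=
    fun b c hb f => DLens.range_closed F hb f
  let Z : LensCat.{u} := LensCat.of (Cat.of (Glue P hP))
  let G : DLens (↑B.toCat) (Glue P hP) :=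
    glueLens (fun _ => False) (fun _ _ => rfl) (fun _ _ _ => Or.inl rfl)
      (fun b y f => by
        rcases f.2 with h | h
        · exact h.symm
        · exact y.cond h)
  let H : DLens (↑B.toCat) (Glue P hP) :=
    glueLens (fun b => ¬ P b) (fun b hb => eq_false (not_not_intro hb))
      (fun b c f => by
        by_cases hc : P c
        · exact Or.inr hc
        · exact Or.inl (propext ⟨fun _ => hc, fun _ hb => hc (hP hb f)⟩))
      (fun b y f => by
        by_cases hy : P y.base
        · rw [y.cond hy]
          exact (eq_false (not_not_intro hy)).symm
        · rcases f.2 with h | h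
          · refine h.symm.trans (propext ⟨fun _ => hy, fun _ => ?_⟩)
            intro hb
            exact hy (hP hb f.1)
          · exact absurd h hy)
  have hGH : G ≠ H := by
    intro hEq
    have hobj := Functor.congr_obj (congrArg DLens.get hEq) b₀
    have htag : False = ¬ P b₀ := congrArg Glue.tag hobj
    exact htag.symm ▸ hb₀
  apply hGH
  have hcomp : DLens.comp (F : DLens (↑A.toCat) (↑B.toCat)) G = DLens.comp F H := by
    refine DLens.ext_lens ?_ ?_
    · refine CategoryTheory.Functor.ext (fun a => ?_) (fun a a' f => ?_)
      · exact Glue.ext' rfl (eq_false (not_not_intro ⟨a, rfl⟩)).symm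
      · refine Subtype.ext ?_
        simp only [glue_comp_val, glue_eqToHom_val]
        exact ((Category.id_comp _).trans (Category.comp_id _)).symm
    · intro a u
      show DLens.put F a (DLens.put G ((DLens.get F).obj a) u)
          = DLens.put F a (DLens.put H ((DLens.get F).obj a) (Out.cast _ u))
      refine congrArg (DLens.put F a) ?_
      apply glueLens_put_eq
  exact hF.left_cancellation (Z := Z) G H hcomp

theorem lens_epi_of_get_epi {A B : LensCat.{u}} (F : A ⟶ B)
    (h : Epi (lensForget.map F)) : Epi F := by
  constructor
  intro Z G H hc
  have hsurj := cat_epi_obj_surjective (lensForget.map F) h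
  have hget : DLens.get G = DLens.get H := by
    have hcg := congrArg DLens.get hc
    exact congrArg Cat.Hom.toFunctor (h.left_cancellation (DLens.get G).toCatHom (DLens.get H).toCatHom (congrArg Functor.toCatHom hcg))
  refine DLens.ext_lens hget ?_
  intro b u
  obtain ⟨a, rfl⟩ := hsurj b
  have hp := DLens.congr_put hc a u
  exact DLens.put_injective F a hp

end EpiAux

/-- The forgetful functor `U : Lens ⥤ Cat` preserves and reflects
epimorphisms: a lens is an epimorphism in `Lens` iff its get functor is an
epimorphism in `Cat`. -/
theorem lensForget_epi_iff (A B : LensCat.{u}) (F : A ⟶ B) :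
    Epi F ↔ Epi (lensForget.map F) := by
  constructor
  · intro hF
    exact epi_get_of_surj F (lens_epi_surj F hF)
  · intro h
    exact lens_epi_of_get_epi F h
end

section
/- Let F₁, F₂ : A → B be lenses, let E : B → C be a lens with E ∘ F₁ = E ∘ F₂ in Lens, and suppose the get functor U E coequalises U F₁ and U F₂ in Cat. Let G : B → D be a lens with G ∘ F₁ = G ∘ F₂, and let H : C → D be the unique functor with U G = H ∘ U E. Then there is a unique lens structure on H satisfying φ_{H,E B} d = E(φ_{G,B} d) for every object B of B and every morphism d of D with source G B. -/
universe u

open CategoryTheory CategoryTheory.Limits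

namespace LensPaper

section CastAux

variable {A : Type*} [Category A] {B : Type*} [Category B]

theorem Out.cast_id' {X Y : A} (h : X = Y) : Out.cast h (Out.id X) = Out.id Y := by
  subst h; simp

theorem Out.cast_self {X : A} (h : X = X) (u : Out X) : Out.cast h u = u :=
  Out.cast_rfl u

theorem Out.cast_symm {X Y : A} (h : X = Y) (u : Out X) (v : Out Y) :
    Out.cast h u = v ↔ u = Out.cast h.symm v := by
  constructor
  · intro hh; rw [← hh, Out.cast_cast, Out.cast_self]
  · intro hh; rw [hh, Out.cast_cast, Out.cast_self]

theorem Out.cast_comp {X Y : A} (h : X = Y) (u : Out X) (v : Out u.1) :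
    Out.cast h (u.comp v) = (Out.cast h u).comp v := by
  subst h; simp [Out.cast, Out.comp] <;> rfl

theorem mapOut_id (F : A ⥤ B) (X : A) : mapOut F (Out.id X) = Out.id (F.obj X) := by
  simp [mapOut, Out.id] <;> rfl

theorem mapOut_comp (F : A ⥤ B) {X : A} (u : Out X) (v : Out u.1) :
    mapOut F (u.comp v) = (mapOut F u).comp (mapOut F v) := by
  simp [mapOut, Out.comp] <;> rfl

theorem mapOut_congr {F F' : A ⥤ B} (hF : F = F') {X : A} (u : Out X)
    (h : F.obj X = F'.obj X) : Out.cast h (mapOut F u) = mapOut F' u := by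
  subst hF; exact Out.cast_rfl _

theorem DLens.put_congr' {K1 K2 : DLens A B} (h : K1 = K2) (X : A)
    (u : Out (K1.get.obj X)) (hX : K1.get.obj X = K2.get.obj X) :
    K1.put X u = K2.put X (Out.cast hX u) := by
  subst h; rw [show Out.cast hX u = u from Out.cast_rfl u]

theorem DLens.ext' {K1 K2 : DLens A B} (hget : K1.get = K2.get)
    (hput : ∀ (X : A) (u : Out (K1.get.obj X)) (hX : K1.get.obj X = K2.get.obj X),
      K1.put X u = K2.put X (Out.cast hX u)) : K1 = K2 := by
  obtain ⟨g1, p1, pg1, pi1, pp1⟩ := K1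
  obtain ⟨g2, p2, pg2, pi2, pp2⟩ := K2
  obtain rfl : g1 = g2 := hget
  obtain rfl : p1 = p2 := by
    funext X u
    simpa using hput X u rfl
  rfl

end CastAux

/-- The chaotic (indiscrete) category on a type. -/
def Chaotic (α : Type u) : Type u := α

instance (α : Type u) : Category.{u} (Chaotic α) where
  Hom _ _ := PUnit
  id _ := ⟨⟩
  comp _ _ := ⟨⟩

/-- The functor into a chaotic category determined by a function on objects. -/
def Chaotic.functorOf {A : Type*} [Category A] {α : Type u} (f : A → α) :
    A ⥤ Chaotic α where
  obj := f
  map _ := ⟨⟩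

theorem Chaotic.functor_ext {A : Type*} [Category A] {α : Type u}
    (F G : A ⥤ Chaotic α) (h : ∀ X, F.obj X = G.obj X) : F = G :=
  CategoryTheory.Functor.ext h (fun _ _ _ => rfl)

/-- The zigzag relation generated by a parallel pair of functors. -/
def zigRel {A B : Type*} [Category A] [Category B] (f1 f2 : A ⥤ B) : B → B → Prop :=
  fun X X' => ∃ a : A, f1.obj a = X ∧ f2.obj a = X'

theorem obj_eq_of_eqvGen {A B C : Type*} [Category A] [Category B] [Category C]
    {f1 f2 : A ⥤ B} (e : B ⥤ C) (w : f1 ⋙ e = f2 ⋙ e) {X X' : B}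
    (h : Relation.EqvGen (zigRel f1 f2) X X') : e.obj X = e.obj X' := by
  induction h with
  | rel x y r => obtain ⟨a, h1, h2⟩ := r; subst h1; subst h2; exact Functor.congr_obj w a
  | refl x => rfl
  | symm x y _ ih => exact ih.symm
  | trans x y z _ _ ih1 ih2 => exact ih1.trans ih2

theorem eqv_of_rel {A B C : Cat.{u, u}} {f1 f2 : A ⟶ B} {e : B ⟶ C}
    (w : f1 ≫ e = f2 ≫ e) (hUE : IsColimit (Cofork.ofπ e w)) {X X' : B}
    (hE : e.toFunctor.obj X = e.toFunctor.obj X') :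
    Relation.EqvGen (zigRel f1.toFunctor f2.toFunctor) X X' := by
  let P : B ⟶ Cat.of (Chaotic (Quot (zigRel f1.toFunctor f2.toFunctor))) :=
    (Chaotic.functorOf (Quot.mk (zigRel f1.toFunctor f2.toFunctor))).toCatHom
  have hP : f1 ≫ P = f2 ≫ P :=
    Cat.Hom.ext (Chaotic.functor_ext _ _ (fun a => Quot.sound ⟨a, rfl, rfl⟩))
  have hq : e ≫ hUE.desc (Cofork.ofπ P hP) = P := by
    simpa using Cofork.IsColimit.π_desc hUE (t := Cofork.ofπ P hP)
  have h1 : (hUE.desc (Cofork.ofπ P hP)).toFunctor.obj (e.toFunctor.obj X) =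
      Quot.mk (zigRel f1.toFunctor f2.toFunctor) X :=
    Functor.congr_obj (congrArg Cat.Hom.toFunctor hq) X
  have h2 : (hUE.desc (Cofork.ofπ P hP)).toFunctor.obj (e.toFunctor.obj X') =
      Quot.mk (zigRel f1.toFunctor f2.toFunctor) X' :=
    Functor.congr_obj (congrArg Cat.Hom.toFunctor hq) X'
  have hmk : Quot.mk (zigRel f1.toFunctor f2.toFunctor) X =
      Quot.mk (zigRel f1.toFunctor f2.toFunctor) X' := by
    rw [← h1, ← h2, hE]
  exact Quot.eq.mp hmk

theorem surj_on_obj {A B C : Cat.{u, u}} {f1 f2 : A ⟶ B} {e : B ⟶ C}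
    (w : f1 ≫ e = f2 ≫ e) (hUE : IsColimit (Cofork.ofπ e w)) :
    ∀ Y : C, ∃ X : B, e.toFunctor.obj X = Y := by
  let P1 : C ⟶ Cat.of (Chaotic (ULift.{u} Prop)) :=
    (Chaotic.functorOf fun (_ : C) => (⟨True⟩ : ULift.{u} Prop)).toCatHom
  let P2 : C ⟶ Cat.of (Chaotic (ULift.{u} Prop)) :=
    (Chaotic.functorOf fun (Y : C) => (⟨∃ X : B, e.toFunctor.obj X = Y⟩ : ULift.{u} Prop)).toCatHom
  have h12 : P1 = P2 := by
    refine Cofork.IsColimit.hom_ext hUE ?_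
    simp only [Cofork.π_ofπ]
    exact Cat.Hom.ext (Chaotic.functor_ext _ _ (fun X =>
      congrArg ULift.up (propext ⟨fun _ => ⟨X, rfl⟩, fun _ => trivial⟩)))
  intro Y
  have h := Functor.congr_obj (congrArg Cat.Hom.toFunctor h12) Y
  have h' : True = (∃ X : B, e.toFunctor.obj X = Y) := congrArg ULift.down h
  exact h' ▸ trivial

theorem key_lemma {A B C D : Type*} [Category A] [Category B] [Category C] [Category D]
    (F1 F2 : DLens A B) (E : DLens B C) (G : DLens B D)
    (wU : F1.get ⋙ E.get = F2.get ⋙ E.get)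
    (wG : F1.comp G = F2.comp G)
    {X X' : B} (hXX' : Relation.EqvGen (zigRel F1.get F2.get) X X') :
    ∀ (h : E.get.obj X = E.get.obj X') (hg : G.get.obj X = G.get.obj X')
      (u : Out (G.get.obj X)),
      Out.cast h (mapOut E.get (G.put X u)) = mapOut E.get (G.put X' (Out.cast hg u)) := by
  have wGU : F1.get ⋙ G.get = F2.get ⋙ G.get := congrArg DLens.get wG
  induction hXX' with
  | rel Y Y' r =>
    intro h hg u
    obtain ⟨A0, h1, h2⟩ := r
    subst h1; subst h2
    have hput : (F1.comp G).put A0 u = (F2.comp G).put A0 (Out.cast hg u) :=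
      DLens.put_congr' wG A0 u hg
    have e1 : mapOut F1.get (F1.put A0 (G.put (F1.get.obj A0) u))
        = G.put (F1.get.obj A0) u := F1.putGet A0 _
    have e2 : mapOut F2.get (F1.put A0 (G.put (F1.get.obj A0) u))
        = G.put (F2.get.obj A0) (Out.cast hg u) := by
      rw [show F1.put A0 (G.put (F1.get.obj A0) u)
          = F2.put A0 (G.put (F2.get.obj A0) (Out.cast hg u)) from hput]
      exact F2.putGet A0 _
    rw [← e1, ← e2]
    exact mapOut_congr wU (F1.put A0 (G.put (F1.get.obj A0) u)) h
  | refl Y =>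
    intro h hg u
    rw [show Out.cast hg u = u from Out.cast_rfl u]
    exact Out.cast_rfl _
  | symm Y Y' r ih =>
    intro h hg u
    have t := ih h.symm hg.symm (Out.cast hg u)
    rw [Out.cast_cast, show Out.cast (hg.trans hg.symm) u = u from Out.cast_rfl u] at t
    rw [← t, Out.cast_cast]
    exact Out.cast_rfl _
  | trans Y Y' Y'' r1 r2 ih1 ih2 =>
    intro h hg u
    have hE1 : E.get.obj Y = E.get.obj Y' := obj_eq_of_eqvGen E.get wU r1
    have hE2 : E.get.obj Y' = E.get.obj Y'' := obj_eq_of_eqvGen E.get wU r2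
    have hg1 : G.get.obj Y = G.get.obj Y' := obj_eq_of_eqvGen G.get wGU r1
    have hg2 : G.get.obj Y' = G.get.obj Y'' := obj_eq_of_eqvGen G.get wGU r2
    calc Out.cast h (mapOut E.get (G.put Y u))
        = Out.cast hE2 (Out.cast hE1 (mapOut E.get (G.put Y u))) := by
          rw [Out.cast_cast]
      _ = Out.cast hE2 (mapOut E.get (G.put Y' (Out.cast hg1 u))) := by
          rw [ih1 hE1 hg1 u]
      _ = mapOut E.get (G.put Y'' (Out.cast hg2 (Out.cast hg1 u))) := ih2 hE2 hg2 _
      _ = mapOut E.get (G.put Y'' (Out.cast hg u)) := by rw [Out.cast_cast]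

section Construction

variable {B : Type*} [Category B] {C : Type*} [Category C] {D : Type*} [Category D]

theorem hgy0 {G : DLens B D} {e : B ⥤ C} {H : C ⥤ D} (hH : e ⋙ H = G.get)
    {sec : C → B} (hsec : ∀ Y, e.obj (sec Y) = Y) (Y : C) :
    H.obj Y = G.get.obj (sec Y) := by
  conv_lhs => rw [← hsec Y]
  exact Functor.congr_obj hH (sec Y)

variable (G : DLens B D) (e : B ⥤ C) (H : C ⥤ D) (hH : e ⋙ H = G.get)
  (sec : C → B) (hsec : ∀ Y, e.obj (sec Y) = Y)
  (key : ∀ (X X' : B) (hE : e.obj X = e.obj X')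
    (hg : G.get.obj X = G.get.obj X') (u : Out (G.get.obj X)),
    Out.cast hE (mapOut e (G.put X u)) = mapOut e (G.put X' (Out.cast hg u)))

/-- The descended lens structure on `H`. -/
def descLens (key : ∀ (X X' : B) (hE : e.obj X = e.obj X')
      (hg : G.get.obj X = G.get.obj X') (u : Out (G.get.obj X)),
      Out.cast hE (mapOut e (G.put X u)) = mapOut e (G.put X' (Out.cast hg u))) :
    DLens C D where
  get := H
  put Y u := Out.cast (hsec Y)
    (mapOut e (G.put (sec Y) (Out.cast (hgy0 hH hsec Y) u)))
  putGet := by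
    intro Y u
    rw [mapOut_cast]
    have hcw : (e ⋙ H).obj (sec Y) = G.get.obj (sec Y) := Functor.congr_obj hH (sec Y)
    have t : Out.cast hcw (mapOut (e ⋙ H) (G.put (sec Y) (Out.cast (hgy0 hH hsec Y) u)))
        = Out.cast (hgy0 hH hsec Y) u := by
      rw [mapOut_congr hH, DLens.putGet]
    have t2 : mapOut (e ⋙ H) (G.put (sec Y) (Out.cast (hgy0 hH hsec Y) u))
        = Out.cast hcw.symm (Out.cast (hgy0 hH hsec Y) u) := (Out.cast_symm hcw _ _).mp t
    calc Out.cast (congrArg H.obj (hsec Y))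
          (mapOut H (mapOut e (G.put (sec Y) (Out.cast (hgy0 hH hsec Y) u))))
        = Out.cast (congrArg H.obj (hsec Y))
            (Out.cast hcw.symm (Out.cast (hgy0 hH hsec Y) u)) := by
          rw [show mapOut H (mapOut e (G.put (sec Y) (Out.cast (hgy0 hH hsec Y) u)))
            = mapOut (e ⋙ H) (G.put (sec Y) (Out.cast (hgy0 hH hsec Y) u)) from rfl, t2]
      _ = u := by rw [Out.cast_cast, Out.cast_cast]; exact Out.cast_rfl u
  putId := by
    intro Y
    rw [show Out.cast (hgy0 hH hsec Y) (Out.id (H.obj Y))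
        = Out.id (G.get.obj (sec Y)) from Out.cast_id' _,
      DLens.putId, mapOut_id, Out.cast_id']
  putPut := by
    intro Y u v hcmp
    rw [Out.cast_comp (hgy0 hH hsec Y) u v]
    rw [G.putPut (sec Y) (Out.cast (hgy0 hH hsec Y) u) v
      (congrArg Sigma.fst (G.putGet (sec Y) (Out.cast (hgy0 hH hsec Y) u))).symm]
    rw [mapOut_comp]
    erw [Out.cast_comp]
    congr 1
    set w := G.put (sec Y) (Out.cast (hgy0 hH hsec Y) u) with hw
    set Y₂ := (Out.cast (hsec Y) (mapOut e w)).1 with hY₂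
    have hE₂ : e.obj (sec Y₂) = e.obj w.1 := hsec Y₂
    have hg₂ : G.get.obj (sec Y₂) = G.get.obj w.1 := by
      rw [← hH]
      exact congrArg H.obj hE₂
    erw [key (sec Y₂) w.1 (hsec Y₂) hg₂ (Out.cast (hgy0 hH hsec Y₂) (Out.cast hcmp v))]
    refine congrArg (fun z => mapOut e (G.put w.1 z)) ?_
    rw [Out.cast_cast, Out.cast_cast]
    try rfl

theorem descLens_prop (X : B) (u : Out (G.get.obj X))
    (h : G.get.obj X = H.obj (e.obj X)) :
    (descLens G e H hH sec hsec key).put (e.obj X) (Out.cast h u) = mapOut e (G.put X u) := by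
  show Out.cast (hsec (e.obj X)) (mapOut e (G.put (sec (e.obj X))
      (Out.cast (hgy0 hH hsec (e.obj X)) (Out.cast h u)))) = mapOut e (G.put X u)
  have hg' : G.get.obj (sec (e.obj X)) = G.get.obj X := by
    rw [← hH]
    exact congrArg H.obj (hsec (e.obj X))
  rw [key (sec (e.obj X)) X (hsec (e.obj X)) hg'
    (Out.cast (hgy0 hH hsec (e.obj X)) (Out.cast h u))]
  refine congrArg (fun z => mapOut e (G.put X z)) ?_
  rw [Out.cast_cast, Out.cast_cast]
  exact Out.cast_rfl u

theorem descLens_unique (L : DLens C D) (hget : L.get = H)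
    (hput : ∀ (X : B) (u : Out (G.get.obj X)) (h : G.get.obj X = L.get.obj (e.obj X)),
      L.put (e.obj X) (Out.cast h u) = mapOut e (G.put X u)) :
    L = descLens G e H hH sec hsec key := by
  refine DLens.ext' hget ?_
  intro Y
  revert Y
  intro Y
  rw [← hsec Y]
  intro u hX
  have hgX : G.get.obj (sec Y) = L.get.obj (e.obj (sec Y)) := by
    rw [hget, ← hH]
    rfl
  have hu : u = Out.cast hgX (Out.cast hgX.symm u) := by
    rw [Out.cast_cast]
    exact (Out.cast_rfl _).symm
  rw [hu, hput (sec Y) (Out.cast hgX.symm u) hgX, Out.cast_cast,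
    descLens_prop G e H hH sec hsec key (sec Y) (Out.cast hgX.symm u) (hgX.trans hX)]

end Construction

end LensPaper
open CategoryTheory CategoryTheory.Limits LensPaper

/-- Let `F1, F2 : A ⟶ B` be lenses, `E : B ⟶ C` a cofork of them
in `Lens` whose get functor coequalises `U F1` and `U F2` in `Cat`. Let
`G : B ⟶ D` be a lens coforking `F1` and `F2`, and let `H : C ⟶ D` be the unique
functor with `U G = H ∘ U E`. Then there is a unique lens structure on `H`
satisfying `φ_{H,E X} d = E (φ_{G,X} d)` for every object `X` of `B` and every
morphism `d` out of `G X`. -/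
theorem comparison_lens (A B C D : LensCat.{u}) (F1 F2 : A ⟶ B) (E : B ⟶ C)
    (w : F1 ≫ E = F2 ≫ E)
    (wU : lensForget.map F1 ≫ lensForget.map E = lensForget.map F2 ≫ lensForget.map E)
    (hUE : IsColimit (Cofork.ofπ (lensForget.map E) wU))
    (G : B ⟶ D) (wG : F1 ≫ G = F2 ≫ G)
    (H : C.toCat ⟶ D.toCat) (hH : lensForget.map E ≫ H = lensForget.map G) :
    ∃! L : C ⟶ D, DLens.get L = H.toFunctor ∧
      ∀ (X : B.toCat) (u : Out ((DLens.get G).obj X))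
        (h : (DLens.get G).obj X = (DLens.get L).obj ((DLens.get E).obj X)),
        DLens.put L ((DLens.get E).obj X) (Out.cast h u) =
          mapOut (DLens.get E) (DLens.put G X u) := by
  classical
  have hH' : DLens.get E ⋙ H.toFunctor = DLens.get G := congrArg Cat.Hom.toFunctor hH
  have wU' : DLens.get F1 ⋙ DLens.get E = DLens.get F2 ⋙ DLens.get E := congrArg Cat.Hom.toFunctor wU
  have hs := surj_on_obj wU hUE
  obtain ⟨sec, hsec⟩ : ∃ s : C.toCat → B.toCat, ∀ Y, (DLens.get E).obj (s Y) = Y :=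
    ⟨fun Y => (hs Y).choose, fun Y => (hs Y).choose_spec⟩
  have key : ∀ (X X' : B.toCat) (hE : (DLens.get E).obj X = (DLens.get E).obj X')
      (hg : (DLens.get G).obj X = (DLens.get G).obj X') (u : Out ((DLens.get G).obj X)),
      Out.cast hE (mapOut (DLens.get E) (DLens.put G X u)) =
        mapOut (DLens.get E) (DLens.put G X' (Out.cast hg u)) :=
    fun X X' hE hg u => key_lemma F1 F2 E G wU' wG (eqv_of_rel wU hUE hE) hE hg u
  refine ⟨descLens G (DLens.get E) H.toFunctor hH' sec hsec key, ⟨rfl, ?_⟩, ?_⟩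
  · intro X u h
    exact descLens_prop G (DLens.get E) H.toFunctor hH' sec hsec key X u h
  · rintro L' ⟨h1, h2⟩
    exact descLens_unique G (DLens.get E) H.toFunctor hH' sec hsec key L' h1 h2
end
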